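/- Let S be a finite set and F = F(S) the free group on S. A Borel probability measure μ on {0,1}^F is an invariant random subgroup of F (i.e., μ ∈ IRS(F)) if and only if for every finite subset B ⊆ F the pushforward R_{B*}μ belongs to Q_B. Equivalently, the intersection over all finite B ⊆ F of the sets Q̃_B = R_{B*}^{-1}(Q_B) equals IRS(F). -/

import Mathlib

open MeasureTheory

/-- `A : ↥B → Bool` is (the indicator of) a pseudo subgroup of `B ⊆ F(S)`:
there is a subgroup `H ≤ F(S)` with `H ∩ B = A`. -/
def IsPseudoSubgroup {S : Type*} (B : Set (FreeGroup S)) (A : ↥B → Bool) : Prop :=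
  ∃ H : Subgroup (FreeGroup S), ∀ b : ↥B, A b = true ↔ (b : FreeGroup S) ∈ H

/-- The cylinder set `𝒞_B(K,L)` of subsets of `B` containing `K` and disjoint from `L`
(for `K, L ⊆ B`), in indicator form. -/
def CSet {S : Type*} (B K L : Set (FreeGroup S)) : Set (↥B → Bool) :=
  {A | ∀ b : ↥B, ((b : FreeGroup S) ∈ K → A b = true) ∧ ((b : FreeGroup S) ∈ L → A b = false)}

/-- `π` is a pseudo invariant random subgroup over `B`: a Borel probability measure on
`{0,1}^B` concentrated on pseudo subgroups of `B`, which is `S`-invariant when defined. -/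
def IsPseudoIRS {S : Type*} [Fintype S] (B : Set (FreeGroup S))
    (π : Measure (↥B → Bool)) : Prop :=
  π {A | IsPseudoSubgroup B A} = 1 ∧
  ∀ K L : Set (FreeGroup S), K.Finite → L.Finite → K ⊆ B → L ⊆ B →
    (∀ s : S, ∀ g ∈ ({FreeGroup.of s, (FreeGroup.of s)⁻¹} : Set (FreeGroup S)),
      (fun w => g * w * g⁻¹) '' K ⊆ B ∧ (fun w => g * w * g⁻¹) '' L ⊆ B) →
    ∀ s : S, ∀ g ∈ ({FreeGroup.of s, (FreeGroup.of s)⁻¹} : Set (FreeGroup S)),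
      π (CSet B K L) =
        π (CSet B ((fun w => g * w * g⁻¹) '' K) ((fun w => g * w * g⁻¹) '' L))

namespace IRSAuxProof

variable {S : Type*}

set_option linter.unusedSectionVars false

lemma countable_freeGroup [Countable S] : Countable (FreeGroup S) := by
  classical
  exact Function.Injective.countable (f := FreeGroup.toWord) FreeGroup.toWord_injective

/-- The plain cylinder set in `{0,1}^F`. -/
def Cyl (K L : Set (FreeGroup S)) : Set (FreeGroup S → Bool) :=
  {A | (∀ k ∈ K, A k = true) ∧ (∀ l ∈ L, A l = false)}

lemma measurable_restrict (B : Set (FreeGroup S)) :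
    Measurable fun (A : FreeGroup S → Bool) (b : ↥B) => A (b : FreeGroup S) :=
  measurable_pi_lambda _ fun _ => measurable_pi_apply _

lemma measurable_conj (w : FreeGroup S) :
    Measurable fun (A : FreeGroup S → Bool) (u : FreeGroup S) => A (w⁻¹ * u * w) :=
  measurable_pi_lambda _ fun _ => measurable_pi_apply _

lemma measurableSet_cyl {K L : Set (FreeGroup S)} (hK : K.Finite) (hL : L.Finite) :
    MeasurableSet (Cyl K L) := by
  have h1 : Cyl K L = (⋂ k ∈ K, (fun A : FreeGroup S → Bool => A k) ⁻¹' {true}) ∩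
      (⋂ l ∈ L, (fun A : FreeGroup S → Bool => A l) ⁻¹' {false}) := by
    ext A; simp [Cyl]
  rw [h1]
  exact (MeasurableSet.biInter hK.countable fun k _ =>
      measurable_pi_apply k (measurableSet_singleton true)).inter
    (MeasurableSet.biInter hL.countable fun l _ =>
      measurable_pi_apply l (measurableSet_singleton false))

lemma restrict_preimage_cset {B K L : Set (FreeGroup S)} (hK : K ⊆ B) (hL : L ⊆ B) :
    (fun (A : FreeGroup S → Bool) (b : ↥B) => A (b : FreeGroup S)) ⁻¹' CSet B K L
      = Cyl K L := by
  ext A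
  simp only [Set.mem_preimage, CSet, Cyl, Set.mem_setOf_eq]
  constructor
  · intro h
    exact ⟨fun k hk => (h ⟨k, hK hk⟩).1 hk, fun l hl => (h ⟨l, hL hl⟩).2 hl⟩
  · intro h b
    exact ⟨fun hb => h.1 b hb, fun hb => h.2 b hb⟩

lemma conj_preimage_cyl (w : FreeGroup S) (K L : Set (FreeGroup S)) :
    (fun (A : FreeGroup S → Bool) (u : FreeGroup S) => A (w⁻¹ * u * w)) ⁻¹' Cyl K L
      = Cyl ((fun u => w⁻¹ * u * w) '' K) ((fun u => w⁻¹ * u * w) '' L) := by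
  ext A
  simp [Cyl, Set.forall_mem_image]

variable [Fintype S] (μ : Measure (FreeGroup S → Bool)) [IsProbabilityMeasure μ]

lemma map_cset_eq (B : Finset (FreeGroup S)) {K L : Set (FreeGroup S)}
    (hK : K ⊆ (B : Set (FreeGroup S))) (hL : L ⊆ (B : Set (FreeGroup S))) :
    (μ.map fun (A : FreeGroup S → Bool) (b : ↥(B : Set (FreeGroup S))) =>
        A (b : FreeGroup S)) (CSet (B : Set (FreeGroup S)) K L) = μ (Cyl K L) := by
  rw [Measure.map_apply (measurable_restrict _) ((Set.toFinite _).measurableSet),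
    restrict_preimage_cset hK hL]

/-- Single generator step from the pseudo IRS hypothesis. -/
lemma step
    (h : ∀ B : Finset (FreeGroup S),
      IsPseudoIRS (B : Set (FreeGroup S))
        (μ.map fun (A : FreeGroup S → Bool) (b : ↥(B : Set (FreeGroup S))) =>
          A (b : FreeGroup S)))
    (s : S) (g : FreeGroup S)
    (hg : g ∈ ({FreeGroup.of s, (FreeGroup.of s)⁻¹} : Set (FreeGroup S)))
    (K L : Set (FreeGroup S)) (hK : K.Finite) (hL : L.Finite) :
    μ (Cyl K L) = μ (Cyl ((fun w => g * w * g⁻¹) '' K) ((fun w => g * w * g⁻¹) '' L)) := by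
  classical
  set B0 : Set (FreeGroup S) := (K ∪ L) ∪
      ⋃ s' : S, ⋃ g' ∈ ({FreeGroup.of s', (FreeGroup.of s')⁻¹} : Set (FreeGroup S)),
        ((fun w => g' * w * g'⁻¹) '' K ∪ (fun w => g' * w * g'⁻¹) '' L) with hB0def
  have hB0 : B0.Finite := by
    refine ((hK.union hL)).union (Set.finite_iUnion fun s' => ?_)
    refine Set.Finite.biUnion ((Set.finite_singleton _).insert _) fun g' _ => ?_
    exact (hK.image _).union (hL.image _)
  set B : Finset (FreeGroup S) := hB0.toFinset with hBdef
  have hBcoe : (B : Set (FreeGroup S)) = B0 := hB0.coe_toFinset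
  have hKB : K ⊆ (B : Set (FreeGroup S)) := by
    rw [hBcoe]; exact fun x hx => Or.inl (Or.inl hx)
  have hLB : L ⊆ (B : Set (FreeGroup S)) := by
    rw [hBcoe]; exact fun x hx => Or.inl (Or.inr hx)
  have hconjB : ∀ s' : S,
      ∀ g' ∈ ({FreeGroup.of s', (FreeGroup.of s')⁻¹} : Set (FreeGroup S)),
      (fun w => g' * w * g'⁻¹) '' K ⊆ (B : Set (FreeGroup S)) ∧
      (fun w => g' * w * g'⁻¹) '' L ⊆ (B : Set (FreeGroup S)) := by
    intro s' g' hg'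
    rw [hBcoe]
    constructor
    · intro x hx
      exact Or.inr (Set.mem_iUnion.2 ⟨s', Set.mem_biUnion hg' (Or.inl hx)⟩)
    · intro x hx
      exact Or.inr (Set.mem_iUnion.2 ⟨s', Set.mem_biUnion hg' (Or.inr hx)⟩)
  have key := (h B).2 K L hK hL hKB hLB hconjB s g hg
  rw [map_cset_eq μ B hKB hLB,
    map_cset_eq μ B (hconjB s g hg).1 (hconjB s g hg).2] at key
  exact key

/-- Conjugation invariance of cylinder measures for arbitrary words. -/
lemma conj_inv
    (h : ∀ B : Finset (FreeGroup S),
      IsPseudoIRS (B : Set (FreeGroup S))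
        (μ.map fun (A : FreeGroup S → Bool) (b : ↥(B : Set (FreeGroup S))) =>
          A (b : FreeGroup S)))
    (w : FreeGroup S) :
    ∀ K L : Set (FreeGroup S), K.Finite → L.Finite →
      μ (Cyl ((fun u => w * u * w⁻¹) '' K) ((fun u => w * u * w⁻¹) '' L)) = μ (Cyl K L) := by
  induction w using FreeGroup.induction_on with
  | C1 =>
    intro K L _ _
    have : (fun u : FreeGroup S => (1 : FreeGroup S) * u * 1⁻¹) = id := by
      funext u; simp
    rw [this, Set.image_id, Set.image_id]
  | of x =>
    intro K L hK hL
    exact (step μ h x (FreeGroup.of x) (Or.inl rfl) K L hK hL).symm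
  | inv_of x _ =>
    intro K L hK hL
    exact (step μ h x (FreeGroup.of x)⁻¹ (Or.inr rfl) K L hK hL).symm
  | mul x y hx hy =>
    intro K L hK hL
    have hfun : (fun u : FreeGroup S => (x * y) * u * (x * y)⁻¹)
        = (fun u => x * u * x⁻¹) ∘ (fun u => y * u * y⁻¹) := by
      funext u; simp [Function.comp]; group
    rw [hfun, Set.image_comp, Set.image_comp]
    rw [hx _ _ (hK.image _) (hL.image _), hy _ _ hK hL]

/-- The cylinder π-system. -/
def cylSys (S : Type*) : Set (Set (FreeGroup S → Bool)) :=
  {t | ∃ K L : Set (FreeGroup S), K.Finite ∧ L.Finite ∧ t = Cyl K L}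

lemma isPiSystem_cylSys : IsPiSystem (cylSys S) := by
  rintro s ⟨K, L, hK, hL, rfl⟩ t ⟨K', L', hK', hL', rfl⟩ -
  refine ⟨K ∪ K', L ∪ L', hK.union hK', hL.union hL', ?_⟩
  ext A
  simp only [Set.mem_inter_iff, Cyl, Set.mem_setOf_eq, Set.mem_union]
  constructor
  · rintro ⟨⟨h1, h2⟩, h3, h4⟩
    exact ⟨fun k hk => hk.elim (h1 k) (h3 k), fun l hl => hl.elim (h2 l) (h4 l)⟩
  · rintro ⟨h1, h2⟩
    exact ⟨⟨fun k hk => h1 k (Or.inl hk), fun l hl => h2 l (Or.inl hl)⟩,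
      fun k hk => h1 k (Or.inr hk), fun l hl => h2 l (Or.inr hl)⟩

lemma generateFrom_cylSys :
    (MeasurableSpace.pi : MeasurableSpace (FreeGroup S → Bool))
      = MeasurableSpace.generateFrom (cylSys S) := by
  refine le_antisymm ?_ (MeasurableSpace.generateFrom_le ?_)
  · refine iSup_le fun i => ?_
    rintro t ⟨s, -, rfl⟩
    rw [← Set.biUnion_preimage_singleton]
    refine @MeasurableSet.biUnion _ _ (MeasurableSpace.generateFrom (cylSys S)) _ _
      s.to_countable fun b _ => ?_
    refine MeasurableSpace.measurableSet_generateFrom ?_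
    cases b with
    | false =>
      refine ⟨∅, {i}, Set.finite_empty, Set.finite_singleton i, ?_⟩
      ext A; simp [Cyl]
    | true =>
      refine ⟨{i}, ∅, Set.finite_singleton i, Set.finite_empty, ?_⟩
      ext A; simp [Cyl]
  · rintro t ⟨K, L, hK, hL, rfl⟩
    exact measurableSet_cyl hK hL

/-- Conjugation invariance of the measure from the pseudo IRS hypothesis. -/
lemma map_conj_eq
    (h : ∀ B : Finset (FreeGroup S),
      IsPseudoIRS (B : Set (FreeGroup S))
        (μ.map fun (A : FreeGroup S → Bool) (b : ↥(B : Set (FreeGroup S))) =>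
          A (b : FreeGroup S)))
    (w : FreeGroup S) :
    μ.map (fun (A : FreeGroup S → Bool) (u : FreeGroup S) => A (w⁻¹ * u * w)) = μ := by
  have hmeas := measurable_conj (S := S) w
  have : IsProbabilityMeasure
      (μ.map (fun (A : FreeGroup S → Bool) (u : FreeGroup S) => A (w⁻¹ * u * w))) :=
    Measure.isProbabilityMeasure_map hmeas.aemeasurable
  refine ext_of_generate_finite (cylSys S) generateFrom_cylSys isPiSystem_cylSys ?_ ?_
  · rintro t ⟨K, L, hK, hL, rfl⟩
    rw [Measure.map_apply hmeas (measurableSet_cyl hK hL), conj_preimage_cyl]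
    have hinv := conj_inv μ h w⁻¹ K L hK hL
    simp only [inv_inv] at hinv
    exact hinv
  · simp [Measure.map_apply hmeas MeasurableSet.univ]

/-- Concentration on subgroups from the pseudo IRS hypothesis. -/
lemma conc
    (h : ∀ B : Finset (FreeGroup S),
      IsPseudoIRS (B : Set (FreeGroup S))
        (μ.map fun (A : FreeGroup S → Bool) (b : ↥(B : Set (FreeGroup S))) =>
          A (b : FreeGroup S))) :
    μ {A : FreeGroup S → Bool |
        ∃ H : Subgroup (FreeGroup S), ∀ w : FreeGroup S, A w = true ↔ w ∈ H} = 1 := by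
  classical
  haveI : Countable (FreeGroup S) := countable_freeGroup
  set SubSet : Set (FreeGroup S → Bool) :=
    {A | ∃ H : Subgroup (FreeGroup S), ∀ w : FreeGroup S, A w = true ↔ w ∈ H} with hSubSet
  set P : Finset (FreeGroup S) → Set (FreeGroup S → Bool) := fun B =>
    (fun (A : FreeGroup S → Bool) (b : ↥(B : Set (FreeGroup S))) => A (b : FreeGroup S)) ⁻¹'
      {A | IsPseudoSubgroup (B : Set (FreeGroup S)) A} with hPdef
  have hPmeas : ∀ B, MeasurableSet (P B) := fun B =>
    (measurable_restrict _) ((Set.toFinite _).measurableSet)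
  have hPmem : ∀ (B : Finset (FreeGroup S)) (A : FreeGroup S → Bool), A ∈ P B ↔
      ∃ H : Subgroup (FreeGroup S), ∀ b : ↥(B : Set (FreeGroup S)),
        A (b : FreeGroup S) = true ↔ (b : FreeGroup S) ∈ H := by
    intro B A; rfl
  have hP1 : ∀ B : Finset (FreeGroup S), μ (P B) = 1 := by
    intro B
    have := (h B).1
    rwa [Measure.map_apply (measurable_restrict _) ((Set.toFinite _).measurableSet)] at this
  have hPcompl : ∀ B : Finset (FreeGroup S), μ (P B)ᶜ = 0 := by
    intro B
    rw [measure_compl (hPmeas B) (measure_ne_top μ _), hP1 B, measure_univ, tsub_self]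
  -- the null "bad" set
  set N : Set (FreeGroup S → Bool) :=
    (P {1})ᶜ ∪ ((⋃ p : FreeGroup S × FreeGroup S, (P {p.1, p.2, p.1 * p.2})ᶜ) ∪
      ⋃ u : FreeGroup S, (P {u, u⁻¹})ᶜ) with hNdef
  have hN0 : μ N = 0 := by
    refine measure_union_null (hPcompl _) (measure_union_null ?_ ?_)
    · exact measure_iUnion_null fun p => hPcompl _
    · exact measure_iUnion_null fun u => hPcompl _
  have hsub : Nᶜ ⊆ SubSet := by
    intro A hA
    simp only [hNdef, Set.compl_union, Set.mem_inter_iff, Set.compl_iUnion, Set.mem_iInter,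
      compl_compl] at hA
    obtain ⟨h1, hmul, hinv⟩ := hA
    have hone : A 1 = true := by
      obtain ⟨H, hH⟩ := (hPmem _ A).1 h1
      have := hH ⟨1, by simp⟩
      simpa using this.2 (one_mem H)
    have hmul' : ∀ u v : FreeGroup S, A u = true → A v = true → A (u * v) = true := by
      intro u v hu hv
      obtain ⟨H, hH⟩ := (hPmem {u, v, u * v} A).1 (hmul (u, v))
      have h1 := hH ⟨u, by simp⟩
      have h2 := hH ⟨v, by simp⟩
      have h3 := hH ⟨u * v, by simp⟩
      exact h3.2 (H.mul_mem (h1.1 hu) (h2.1 hv))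
    have hinv' : ∀ u : FreeGroup S, A u = true → A u⁻¹ = true := by
      intro u hu
      obtain ⟨H, hH⟩ := (hPmem {u, u⁻¹} A).1 (hinv u)
      have h1 := hH ⟨u, by simp⟩
      have h2 := hH ⟨u⁻¹, by simp⟩
      exact h2.2 (H.inv_mem (h1.1 hu))
    refine ⟨{ carrier := {w | A w = true}
              one_mem' := hone
              mul_mem' := fun ha hb => hmul' _ _ ha hb
              inv_mem' := fun ha => hinv' _ ha }, fun w => Iff.rfl⟩
  have hSubc : μ SubSetᶜ = 0 :=
    le_antisymm (by
      have : SubSetᶜ ⊆ N := by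
        intro A hA
        by_contra hAN
        exact hA (hsub hAN)
      calc μ SubSetᶜ ≤ μ N := measure_mono this
        _ = 0 := hN0) (zero_le)
  have hge : (1 : ENNReal) ≤ μ SubSet := by
    have h1 : μ Set.univ ≤ μ SubSet + μ SubSetᶜ := by
      rw [← Set.union_compl_self SubSet]
      exact measure_union_le _ _
    rw [measure_univ, hSubc, add_zero] at h1
    exact h1
  exact le_antisymm prob_le_one hge

end IRSAuxProof

/-- A Borel probability measure `μ` on `{0,1}^{F(S)}` is an invariant random subgroup of
the free group `F(S)` (concentrated on subgroups and invariant under the conjugation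
action `(w.A)(u) = A(w⁻¹uw)`) iff for every finite `B ⊆ F(S)` the pushforward of `μ`
along the restriction map `R_B` is a pseudo invariant random subgroup over `B`,
i.e. `IRS(F) = ⋂_{B finite} Q̃_B`. -/
theorem isIRS_iff_pseudoIRS (S : Type*) [Fintype S]
    (μ : Measure (FreeGroup S → Bool)) [IsProbabilityMeasure μ] :
    (μ {A : FreeGroup S → Bool |
        ∃ H : Subgroup (FreeGroup S), ∀ w : FreeGroup S, A w = true ↔ w ∈ H} = 1 ∧
     ∀ w : FreeGroup S,
        μ.map (fun (A : FreeGroup S → Bool) (u : FreeGroup S) => A (w⁻¹ * u * w)) = μ) ↔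
    ∀ B : Finset (FreeGroup S),
      IsPseudoIRS (B : Set (FreeGroup S))
        (μ.map fun (A : FreeGroup S → Bool) (b : ↥(B : Set (FreeGroup S))) =>
          A (b : FreeGroup S)) := by
  open IRSAuxProof in
  constructor
  · rintro ⟨hconc, hinv⟩ B
    constructor
    · -- concentration
      rw [Measure.map_apply (measurable_restrict _) ((Set.toFinite _).measurableSet)]
      refine le_antisymm prob_le_one ?_
      calc (1 : ENNReal)
          = μ {A : FreeGroup S → Bool |
              ∃ H : Subgroup (FreeGroup S), ∀ w : FreeGroup S, A w = true ↔ w ∈ H} :=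
            hconc.symm
        _ ≤ _ := by
            refine measure_mono ?_
            rintro A ⟨H, hH⟩
            exact ⟨H, fun b => hH b⟩
    · -- invariance
      intro K L hK hL hKB hLB hconj s g hg
      rw [map_cset_eq μ B hKB hLB, map_cset_eq μ B (hconj s g hg).1 (hconj s g hg).2]
      have hfix := hinv g
      have hmeas := measurable_conj (S := S) g
      have : μ (Cyl ((fun w => g * w * g⁻¹) '' K) ((fun w => g * w * g⁻¹) '' L))
          = μ ((fun (A : FreeGroup S → Bool) (u : FreeGroup S) => A (g⁻¹ * u * g)) ⁻¹'
              Cyl ((fun w => g * w * g⁻¹) '' K) ((fun w => g * w * g⁻¹) '' L)) := by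
        conv_lhs => rw [← hfix]
        rw [Measure.map_apply hmeas (measurableSet_cyl (hK.image _) (hL.image _))]
      rw [this, conj_preimage_cyl]
      have himg : ∀ T : Set (FreeGroup S),
          (fun u => g⁻¹ * u * g) '' ((fun w => g * w * g⁻¹) '' T) = T := by
        intro T
        rw [Set.image_image]
        have : ∀ w : FreeGroup S, g⁻¹ * (g * w * g⁻¹) * g = w := fun w => by group
        simp only [this, Set.image_id']
      rw [himg K, himg L]
  · intro h
    exact ⟨conc μ h, fun w => map_conj_eq μ h w⟩
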